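/- Let λ ≠ 1, γ = 2/(λ−1), σ ∈ ℝ, u₀ ∈ C²(ℝ) 1-periodic, and let η : [0,T) × ℝ → ℝ be C³ with η(t,θ+1) = η(t,θ)+1, η_θ > 0, η(0,θ) = θ, η_t(0,θ) = u₀(θ), satisfying η_ttθ = −((λ−3)/2) η_tθ²/η_θ + [λσ(η_t − σ) + ((λ−3)/2) E(t)] η_θ with E(t) = ∫₀¹ η_tθ²/η_θ dφ. Define x = η_θ^{1/γ} and y = −γ x_θ + σ x ∫₀ᵗ x(τ,·)^γ dτ. Then the angular momentum x(t,θ) y_t(t,θ) − y(t,θ) x_t(t,θ) is independent of t and equals m₀(θ) = σ − u₀''(θ) for all (t,θ); moreover it satisfies the identity x y_t − y x_t = σ η_θ^λ − η_θ^{λ−1} ∂_θ(η_tθ/η_θ). -/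

import Mathlib

open Set intervalIntegral MeasureTheory Filter Topology

private lemma aux_ftc (J : Set ℝ) (hJcases : J = Ici (0:ℝ) ∨ ∃ b : ℝ, 0 < b ∧ J = Ico 0 b)
    (g : ℝ → ℝ) (hg : ContinuousOn g J) (t : ℝ) (ht : t ∈ J) :
    HasDerivWithinAt (fun u => ∫ τ in (0:ℝ)..u, g τ) (g t) J t := by
  have h0J : (0:ℝ) ∈ J := by
    rcases hJcases with h | ⟨b, hb, h⟩ <;> rw [h]
    · exact self_mem_Ici
    · exact ⟨le_refl 0, hb⟩
  have hJIci : J ⊆ Ici (0:ℝ) := by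
    rcases hJcases with h | ⟨b, hb, h⟩
    · rw [h]
    · rw [h]
      exact Ico_subset_Ici_self
  have hmeasJ : MeasurableSet J := by
    rcases hJcases with h | ⟨b, hb, h⟩ <;> rw [h] <;> [exact measurableSet_Ici; exact measurableSet_Ico]
  have hnhds : 0 < t → J ∈ 𝓝 t := by
    intro h0
    rcases hJcases with h | ⟨b, hb, h⟩
    · rw [h]; exact mem_of_superset (isOpen_Ioi.mem_nhds h0) Ioi_subset_Ici_self
    · rw [h] at ht ⊢
      exact mem_of_superset (isOpen_Ioo.mem_nhds ⟨h0, ht.2⟩) Ioo_subset_Ico_self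
  have hnhds0 : J ∈ 𝓝[>] (0:ℝ) := by
    rcases hJcases with h | ⟨b, hb, h⟩ <;> rw [h]
    · exact mem_of_superset self_mem_nhdsWithin Ioi_subset_Ici_self
    · rw [mem_nhdsWithin]
      exact ⟨Iio b, isOpen_Iio, hb, fun x hx => ⟨le_of_lt hx.2, hx.1⟩⟩
  have huIccJ : uIcc (0:ℝ) t ⊆ J := by
    rw [uIcc_of_le (hJIci ht)]
    rcases hJcases with h | ⟨b, hb, h⟩
    · rw [h]; intro s hs; exact hs.1
    · rw [h] at ht ⊢; intro s hs; exact ⟨hs.1, lt_of_le_of_lt hs.2 ht.2⟩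
  have hint : IntervalIntegrable g volume 0 t := (hg.mono huIccJ).intervalIntegrable
  rcases eq_or_lt_of_le (mem_Ici.mp (hJIci ht) : (0:ℝ) ≤ t) with h0 | h0
  · subst h0
    have h1 : HasDerivWithinAt (fun u => ∫ τ in (0:ℝ)..u, g τ) (g 0) (Ici 0) 0 :=
      intervalIntegral.integral_hasDerivWithinAt_right (t := Ioi 0) hint
        ⟨J, hnhds0, hg.aestronglyMeasurable hmeasJ⟩
        ((hg 0 h0J).mono_of_mem_nhdsWithin hnhds0)
    exact h1.mono hJIci
  · have hJn : J ∈ 𝓝 t := hnhds h0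
    exact (intervalIntegral.integral_hasDerivAt_right hint
      ⟨J, hJn, hg.aestronglyMeasurable hmeasJ⟩ (hg.continuousAt hJn)).hasDerivWithinAt

private lemma aux_conserved (lam σ : ℝ) (J : Set ℝ)
    (hJcases : J = Ici (0:ℝ) ∨ ∃ b : ℝ, 0 < b ∧ J = Ico 0 b)
    (ηt ηθ ηtθ ηθθ ηttθ ηtθθ : ℝ → ℝ → ℝ)
    (hηθpos : ∀ t ∈ J, ∀ θ : ℝ, 0 < ηθ t θ)
    (hηtθ : ∀ t ∈ J, ∀ θ : ℝ, HasDerivAt (ηt t) (ηtθ t θ) θ)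
    (hηθθ : ∀ t ∈ J, ∀ θ : ℝ, HasDerivAt (ηθ t) (ηθθ t θ) θ)
    (hηθt : ∀ θ : ℝ, ∀ t ∈ J, HasDerivWithinAt (fun s => ηθ s θ) (ηtθ t θ) J t)
    (hηttθ : ∀ θ : ℝ, ∀ t ∈ J, HasDerivWithinAt (fun s => ηtθ s θ) (ηttθ t θ) J t)
    (hηtθθ : ∀ t ∈ J, ∀ θ : ℝ, HasDerivAt (ηtθ t) (ηtθθ t θ) θ)
    (hηθc : ContinuousOn (fun p : ℝ × ℝ => ηθ p.1 p.2) (J ×ˢ univ))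
    (hηtθc : ContinuousOn (fun p : ℝ × ℝ => ηtθ p.1 p.2) (J ×ˢ univ))
    (hηθθc : ContinuousOn (fun p : ℝ × ℝ => ηθθ p.1 p.2) (J ×ˢ univ))
    (hηttθc : ContinuousOn (fun p : ℝ × ℝ => ηttθ p.1 p.2) (J ×ˢ univ))
    (hηtθθc : ContinuousOn (fun p : ℝ × ℝ => ηtθθ p.1 p.2) (J ×ˢ univ))
    (hPDE : ∀ t ∈ J, ∀ θ : ℝ, ηttθ t θ
        = -((lam - 3) / 2) * ηtθ t θ ^ 2 / ηθ t θ
          + (lam * σ * (ηt t θ - σ)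
              + (lam - 3) / 2 * (∫ φ in (0:ℝ)..1, ηtθ t φ ^ 2 / ηθ t φ)) * ηθ t θ) :
    ∀ t ∈ J, ∀ θ : ℝ,
      σ * ηθ t θ ^ lam - ηθ t θ ^ (lam - 1)
          * ((ηtθθ t θ * ηθ t θ - ηtθ t θ * ηθθ t θ) / ηθ t θ ^ 2)
        = σ * ηθ 0 θ ^ lam - ηθ 0 θ ^ (lam - 1)
          * ((ηtθθ 0 θ * ηθ 0 θ - ηtθ 0 θ * ηθθ 0 θ) / ηθ 0 θ ^ 2) := by
  -- basic facts about J
  have h0J : (0:ℝ) ∈ J := by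
    rcases hJcases with h | ⟨b, hb, h⟩ <;> rw [h]
    · exact self_mem_Ici
    · exact ⟨le_refl 0, hb⟩
  have hJIci : J ⊆ Ici (0:ℝ) := by
    rcases hJcases with h | ⟨b, hb, h⟩
    · rw [h]
    · rw [h]
      exact Ico_subset_Ici_self
  have hconv : Convex ℝ J := by
    rcases hJcases with h | ⟨b, hb, h⟩ <;> rw [h]
    · exact convex_Ici 0
    · exact convex_Ico 0 b
  have hIccJ : ∀ t ∈ J, Icc (0:ℝ) t ⊆ J := by
    intro t ht
    rcases hJcases with h | ⟨b, hb, h⟩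
    · rw [h]; intro s hs; exact hs.1
    · rw [h] at ht ⊢; intro s hs; exact ⟨hs.1, lt_of_le_of_lt hs.2 ht.2⟩
  have huIccJ : ∀ t ∈ J, uIcc (0:ℝ) t ⊆ J := fun t ht => by
    rw [uIcc_of_le (hJIci ht)]; exact hIccJ t ht
  have hnhds : ∀ t ∈ J, 0 < t → J ∈ 𝓝 t := by
    intro t ht h0
    rcases hJcases with h | ⟨b, hb, h⟩
    · rw [h]; exact mem_of_superset (isOpen_Ioi.mem_nhds h0) Ioi_subset_Ici_self
    · rw [h] at ht ⊢
      exact mem_of_superset (isOpen_Ioo.mem_nhds ⟨h0, ht.2⟩) Ioo_subset_Ico_self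
  have hane : ∀ t ∈ J, ∀ ψ : ℝ, ηθ t ψ ≠ 0 := fun t ht ψ => (hηθpos t ht ψ).ne'
  -- continuity helpers
  have slice : ∀ G : ℝ × ℝ → ℝ, ContinuousOn G (J ×ˢ univ) → ∀ ψ : ℝ,
      ContinuousOn (fun τ => G (τ, ψ)) J := by
    intro G hG ψ
    exact hG.comp (Continuous.continuousOn (continuous_id.prodMk continuous_const))
      (fun τ hτ => ⟨hτ, mem_univ _⟩)
  have hRfc2 : ContinuousOn (fun q : ℝ × ℝ =>
      (ηttθ q.1 q.2 * ηθ q.1 q.2 - ηtθ q.1 q.2 * ηtθ q.1 q.2) / ηθ q.1 q.2 ^ 2) (J ×ˢ univ) :=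
    ((hηttθc.mul hηθc).sub (hηtθc.mul hηtθc)).div (hηθc.pow 2)
      (fun q hq => pow_ne_zero 2 (hane q.1 hq.1 q.2))
  have hwc2 : ContinuousOn (fun q : ℝ × ℝ =>
      (ηtθθ q.1 q.2 * ηθ q.1 q.2 - ηtθ q.1 q.2 * ηθθ q.1 q.2) / ηθ q.1 q.2 ^ 2) (J ×ˢ univ) :=
    ((hηtθθc.mul hηθc).sub (hηtθc.mul hηθθc)).div (hηθc.pow 2)
      (fun q hq => pow_ne_zero 2 (hane q.1 hq.1 q.2))
  have hRθc2 : ContinuousOn (fun q : ℝ × ℝ =>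
      -(lam - 1) * (ηtθ q.1 q.2 / ηθ q.1 q.2)
          * ((ηtθθ q.1 q.2 * ηθ q.1 q.2 - ηtθ q.1 q.2 * ηθθ q.1 q.2) / ηθ q.1 q.2 ^ 2)
        + lam * σ * ηtθ q.1 q.2) (J ×ˢ univ) :=
    ((continuousOn_const.mul (hηtθc.div hηθc (fun q hq => hane q.1 hq.1 q.2))).mul hwc2).add
      (continuousOn_const.mul hηtθc)
  -- derivative structure
  have hVθ : ∀ s ∈ J, ∀ ψ : ℝ, HasDerivAt (fun x => ηtθ s x / ηθ s x)
      ((ηtθθ s ψ * ηθ s ψ - ηtθ s ψ * ηθθ s ψ) / ηθ s ψ ^ 2) ψ :=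
    fun s hs ψ => (hηtθθ s hs ψ).div (hηθθ s hs ψ) (hane s hs ψ)
  have hVt : ∀ ψ : ℝ, ∀ s ∈ J, HasDerivWithinAt (fun τ => ηtθ τ ψ / ηθ τ ψ)
      ((ηttθ s ψ * ηθ s ψ - ηtθ s ψ * ηtθ s ψ) / ηθ s ψ ^ 2) J s :=
    fun ψ s hs => (hηttθ ψ s hs).div (hηθt ψ s hs) (hane s hs ψ)
  -- the PDE rewritten
  have hRf_eq : ∀ s ∈ J, ∀ ψ : ℝ,
      (ηttθ s ψ * ηθ s ψ - ηtθ s ψ * ηtθ s ψ) / ηθ s ψ ^ 2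
        = -((lam - 1) / 2) * (ηtθ s ψ / ηθ s ψ) ^ 2 + lam * σ * (ηt s ψ - σ)
          + (lam - 3) / 2 * (∫ φ in (0:ℝ)..1, ηtθ s φ ^ 2 / ηθ s φ) := by
    intro s hs ψ
    have ha := hane s hs ψ
    rw [hPDE s hs ψ]
    field_simp
    ring
  -- θ-derivative of Rf
  have hRθd : ∀ s ∈ J, ∀ ψ : ℝ, HasDerivAt
      (fun x => (ηttθ s x * ηθ s x - ηtθ s x * ηtθ s x) / ηθ s x ^ 2)
      (-(lam - 1) * (ηtθ s ψ / ηθ s ψ)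
          * ((ηtθθ s ψ * ηθ s ψ - ηtθ s ψ * ηθθ s ψ) / ηθ s ψ ^ 2)
        + lam * σ * ηtθ s ψ) ψ := by
    intro s hs ψ
    have h1 : HasDerivAt (fun x => -((lam - 1) / 2) * (ηtθ s x / ηθ s x) ^ 2
        + lam * σ * (ηt s x - σ)
        + (lam - 3) / 2 * (∫ φ in (0:ℝ)..1, ηtθ s φ ^ 2 / ηθ s φ))
        (-((lam - 1) / 2) * ((2:ℕ) * (ηtθ s ψ / ηθ s ψ) ^ (2 - 1)
            * ((ηtθθ s ψ * ηθ s ψ - ηtθ s ψ * ηθθ s ψ) / ηθ s ψ ^ 2))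
          + lam * σ * ηtθ s ψ) ψ := by
      exact ((((hVθ s hs ψ).pow 2).const_mul (-((lam - 1) / 2))).add
        (((hηtθ s hs ψ).sub_const σ).const_mul (lam * σ))).add_const _
    have hfun : (fun x => -((lam - 1) / 2) * (ηtθ s x / ηθ s x) ^ 2
        + lam * σ * (ηt s x - σ)
        + (lam - 3) / 2 * (∫ φ in (0:ℝ)..1, ηtθ s φ ^ 2 / ηθ s φ))
        = (fun x => (ηttθ s x * ηθ s x - ηtθ s x * ηtθ s x) / ηθ s x ^ 2) :=
      funext fun x => (hRf_eq s hs x).symm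
    rw [hfun] at h1
    convert h1 using 1
    push_cast
    ring
  -- FTC in time for V
  have hV_int : ∀ s ∈ J, ∀ ψ : ℝ,
      ηtθ s ψ / ηθ s ψ - ηtθ 0 ψ / ηθ 0 ψ
        = ∫ τ in (0:ℝ)..s, (ηttθ τ ψ * ηθ τ ψ - ηtθ τ ψ * ηtθ τ ψ) / ηθ τ ψ ^ 2 := by
    intro s hs ψ
    have hIcc := hIccJ s hs
    refine (intervalIntegral.integral_eq_sub_of_hasDeriv_right_of_le (hJIci hs)
      (fun τ hτ => ((hVt ψ τ (hIcc hτ)).continuousWithinAt).mono hIcc) ?_ ?_).symm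
    · intro x hx
      have hxJ : x ∈ J := hIcc ⟨le_of_lt hx.1, le_of_lt hx.2⟩
      exact ((hVt ψ x hxJ).hasDerivAt (hnhds x hxJ hx.1)).hasDerivWithinAt
    · exact ((slice _ hRfc2 ψ).mono (huIccJ s hs)).intervalIntegrable
  intro t ht θ₀
  -- conservation of w along time through the integral representation
  have hw_int : ∀ s ∈ J,
      (ηtθθ s θ₀ * ηθ s θ₀ - ηtθ s θ₀ * ηθθ s θ₀) / ηθ s θ₀ ^ 2
        - (ηtθθ 0 θ₀ * ηθ 0 θ₀ - ηtθ 0 θ₀ * ηθθ 0 θ₀) / ηθ 0 θ₀ ^ 2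
      = ∫ τ in (0:ℝ)..s,
          (-(lam - 1) * (ηtθ τ θ₀ / ηθ τ θ₀)
              * ((ηtθθ τ θ₀ * ηθ τ θ₀ - ηtθ τ θ₀ * ηθθ τ θ₀) / ηθ τ θ₀ ^ 2)
            + lam * σ * ηtθ τ θ₀) := by
    intro s hs
    have hΙJ : uIoc (0:ℝ) s ⊆ J := fun τ hτ => (huIccJ s hs) (uIoc_subset_uIcc hτ)
    have hKsub : (uIcc (0:ℝ) s) ×ˢ Icc (θ₀ - 1) (θ₀ + 1) ⊆ J ×ˢ univ :=
      prod_mono (huIccJ s hs) (subset_univ _)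
    obtain ⟨C, hC⟩ := (isCompact_uIcc.prod isCompact_Icc).exists_bound_of_continuousOn
      (hRθc2.mono hKsub)
    have hparam := (intervalIntegral.hasDerivAt_integral_of_dominated_loc_of_deriv_le
      (F := fun ψ τ => (ηttθ τ ψ * ηθ τ ψ - ηtθ τ ψ * ηtθ τ ψ) / ηθ τ ψ ^ 2)
      (F' := fun ψ τ => -(lam - 1) * (ηtθ τ ψ / ηθ τ ψ)
              * ((ηtθθ τ ψ * ηθ τ ψ - ηtθ τ ψ * ηθθ τ ψ) / ηθ τ ψ ^ 2)
            + lam * σ * ηtθ τ ψ)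
      (x₀ := θ₀) (a := 0) (b := s) (bound := fun _ => C)
      (Metric.ball_mem_nhds θ₀ one_pos)
      (Eventually.of_forall fun x =>
        (((slice _ hRfc2 x).mono hΙJ).aestronglyMeasurable measurableSet_uIoc))
      (((slice _ hRfc2 θ₀).mono (huIccJ s hs)).intervalIntegrable)
      (((slice _ hRθc2 θ₀).mono hΙJ).aestronglyMeasurable measurableSet_uIoc)
      (ae_of_all _ fun τ hτ x hx => by
        have hx' : x ∈ Icc (θ₀ - 1) (θ₀ + 1) := by
          rw [Real.ball_eq_Ioo] at hx
          exact Ioo_subset_Icc_self hx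
        exact hC (τ, x) ⟨uIoc_subset_uIcc hτ, hx'⟩)
      (intervalIntegrable_const : IntervalIntegrable (fun _ => C) volume 0 s)
      (ae_of_all _ fun τ hτ x _ => hRθd τ (hΙJ hτ) x)).2
    have hfeq : (fun ψ => ∫ τ in (0:ℝ)..s,
        (ηttθ τ ψ * ηθ τ ψ - ηtθ τ ψ * ηtθ τ ψ) / ηθ τ ψ ^ 2)
        = fun ψ => ηtθ s ψ / ηθ s ψ - ηtθ 0 ψ / ηθ 0 ψ :=
      funext fun ψ => (hV_int s hs ψ).symm
    rw [hfeq] at hparam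
    exact ((hVθ s hs θ₀).sub (hVθ 0 h0J θ₀)).unique hparam
  -- time derivative of w
  have hwt : ∀ s ∈ J, HasDerivWithinAt
      (fun τ => (ηtθθ τ θ₀ * ηθ τ θ₀ - ηtθ τ θ₀ * ηθθ τ θ₀) / ηθ τ θ₀ ^ 2)
      (-(lam - 1) * (ηtθ s θ₀ / ηθ s θ₀)
          * ((ηtθθ s θ₀ * ηθ s θ₀ - ηtθ s θ₀ * ηθθ s θ₀) / ηθ s θ₀ ^ 2)
        + lam * σ * ηtθ s θ₀) J s := by
    intro s hs
    have h1 := (aux_ftc J hJcases _ (slice _ hRθc2 θ₀) s hs).const_add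
      ((ηtθθ 0 θ₀ * ηθ 0 θ₀ - ηtθ 0 θ₀ * ηθθ 0 θ₀) / ηθ 0 θ₀ ^ 2)
    exact h1.congr (fun τ hτ => by linarith [hw_int τ hτ])
      (by linarith [hw_int s hs])
  -- the conserved quantity has zero time derivative
  have hFt : ∀ s ∈ J, HasDerivWithinAt
      (fun τ => σ * ηθ τ θ₀ ^ lam - ηθ τ θ₀ ^ (lam - 1)
          * ((ηtθθ τ θ₀ * ηθ τ θ₀ - ηtθ τ θ₀ * ηθθ τ θ₀) / ηθ τ θ₀ ^ 2))
      0 J s := by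
    intro s hs
    have ha := hηθpos s hs θ₀
    have h1 : HasDerivWithinAt (fun τ => ηθ τ θ₀ ^ lam)
        (ηtθ s θ₀ * lam * ηθ s θ₀ ^ (lam - 1)) J s :=
      (hηθt θ₀ s hs).rpow_const (Or.inl (hane s hs θ₀))
    have h2 : HasDerivWithinAt (fun τ => ηθ τ θ₀ ^ (lam - 1))
        (ηtθ s θ₀ * (lam - 1) * ηθ s θ₀ ^ (lam - 1 - 1)) J s :=
      (hηθt θ₀ s hs).rpow_const (Or.inl (hane s hs θ₀))
    have h3 := (h1.const_mul σ).sub (h2.mul (hwt s hs))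
    refine h3.congr_deriv ?_
    rw [show lam - 1 - 1 = lam - 1 - 1 from rfl, Real.rpow_sub ha (lam - 1) 1, Real.rpow_one]
    field_simp
    ring
  -- constancy
  have hmvt := hconv.norm_image_sub_le_of_norm_hasDerivWithin_le
    (f' := fun _ => (0:ℝ)) (C := 0) (fun s hs => hFt s hs)
    (fun s _ => by simp) h0J ht
  have : ‖(σ * ηθ t θ₀ ^ lam - ηθ t θ₀ ^ (lam - 1)
      * ((ηtθθ t θ₀ * ηθ t θ₀ - ηtθ t θ₀ * ηθθ t θ₀) / ηθ t θ₀ ^ 2))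
    - (σ * ηθ 0 θ₀ ^ lam - ηθ 0 θ₀ ^ (lam - 1)
      * ((ηtθθ 0 θ₀ * ηθ 0 θ₀ - ηtθ 0 θ₀ * ηθθ 0 θ₀) / ηθ 0 θ₀ ^ 2))‖ ≤ 0 := by
    simpa using hmvt
  have := le_antisymm this (norm_nonneg _)
  rwa [norm_sub_eq_zero_iff] at this
/-- the angular momentum x y_t - y x_t of the solar model is conserved
and equals the initial momentum m₀ = σ - u₀''; moreover it satisfies the identity
x y_t - y x_t = σ η_θ^λ - η_θ^{λ-1} ∂_θ(η_tθ/η_θ). -/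
theorem stmt_6 (lam : ℝ) (hlam : lam ≠ 1) (γ : ℝ) (hγ : γ = 2 / (lam - 1))
    (σ : ℝ) (u₀ : ℝ → ℝ) (hu₀ : ContDiff ℝ 2 u₀) (hu₀per : ∀ θ : ℝ, u₀ (θ + 1) = u₀ θ)
    (T : EReal) (hT : 0 < T)
    (J : Set ℝ) (hJ : J = {t : ℝ | 0 ≤ t ∧ (t : EReal) < T})
    (η ηt ηθ ηtθ ηθθ ηttθ ηtθθ : ℝ → ℝ → ℝ)
    (hη0 : ∀ θ : ℝ, η 0 θ = θ)
    (hηt0 : ∀ θ : ℝ, ηt 0 θ = u₀ θ)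
    (hηper : ∀ t ∈ J, ∀ θ : ℝ, η t (θ + 1) = η t θ + 1)
    (hηθpos : ∀ t ∈ J, ∀ θ : ℝ, 0 < ηθ t θ)
    (hηt : ∀ θ : ℝ, ∀ t ∈ J, HasDerivWithinAt (fun s => η s θ) (ηt t θ) J t)
    (hηθ : ∀ t ∈ J, ∀ θ : ℝ, HasDerivAt (η t) (ηθ t θ) θ)
    (hηtθ : ∀ t ∈ J, ∀ θ : ℝ, HasDerivAt (ηt t) (ηtθ t θ) θ)
    (hηθθ : ∀ t ∈ J, ∀ θ : ℝ, HasDerivAt (ηθ t) (ηθθ t θ) θ)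
    (hηθt : ∀ θ : ℝ, ∀ t ∈ J, HasDerivWithinAt (fun s => ηθ s θ) (ηtθ t θ) J t)
    (hηttθ : ∀ θ : ℝ, ∀ t ∈ J, HasDerivWithinAt (fun s => ηtθ s θ) (ηttθ t θ) J t)
    (hηtθθ : ∀ t ∈ J, ∀ θ : ℝ, HasDerivAt (ηtθ t) (ηtθθ t θ) θ)
    (hηθθt : ∀ θ : ℝ, ∀ t ∈ J, HasDerivWithinAt (fun s => ηθθ s θ) (ηtθθ t θ) J t)
    (hηθc : ContinuousOn (fun p : ℝ × ℝ => ηθ p.1 p.2) (J ×ˢ univ))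
    (hηtθc : ContinuousOn (fun p : ℝ × ℝ => ηtθ p.1 p.2) (J ×ˢ univ))
    (hηθθc : ContinuousOn (fun p : ℝ × ℝ => ηθθ p.1 p.2) (J ×ˢ univ))
    (hηttθc : ContinuousOn (fun p : ℝ × ℝ => ηttθ p.1 p.2) (J ×ˢ univ))
    (hηtθθc : ContinuousOn (fun p : ℝ × ℝ => ηtθθ p.1 p.2) (J ×ˢ univ))
    -- the Lagrangian form of the μ-λ equation
    (hPDE : ∀ t ∈ J, ∀ θ : ℝ, ηttθ t θ
        = -((lam - 3) / 2) * ηtθ t θ ^ 2 / ηθ t θ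
          + (lam * σ * (ηt t θ - σ)
              + (lam - 3) / 2 * (∫ φ in (0:ℝ)..1, ηtθ t φ ^ 2 / ηθ t φ)) * ηθ t θ) :
    -- for the solar variables x = η_θ^{1/γ}, y = -γ x_θ + σ x ∫₀ᵗ x^γ dτ,
    -- with time derivatives Xt, Yt:
    ∀ X Xt Y Yt : ℝ → ℝ → ℝ,
      (∀ t ∈ J, ∀ θ : ℝ, X t θ = ηθ t θ ^ (1 / γ)) →
      (∀ t ∈ J, ∀ θ : ℝ,
        Y t θ = -γ * deriv (X t) θ + σ * X t θ * ∫ τ in (0:ℝ)..t, X τ θ ^ γ) →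
      (∀ θ : ℝ, ∀ t ∈ J, HasDerivWithinAt (fun s => X s θ) (Xt t θ) J t) →
      (∀ θ : ℝ, ∀ t ∈ J, HasDerivWithinAt (fun s => Y s θ) (Yt t θ) J t) →
      ∀ t ∈ J, ∀ θ : ℝ,
        X t θ * Yt t θ - Y t θ * Xt t θ = σ - deriv (deriv u₀) θ ∧
        X t θ * Yt t θ - Y t θ * Xt t θ
          = σ * ηθ t θ ^ lam
            - ηθ t θ ^ (lam - 1) * deriv (fun ψ => ηtθ t ψ / ηθ t ψ) θ := by
  intro X Xt Y Yt hX hY hXt hYt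
  -- structure of J
  have hTbot : T ≠ ⊥ := fun h => by simp [h] at hT
  have hJcases : J = Ici (0:ℝ) ∨ ∃ b : ℝ, 0 < b ∧ J = Ico 0 b := by
    by_cases htop : T = ⊤
    · left; rw [hJ]; ext s; simp [htop, EReal.coe_lt_top]
    · right
      refine ⟨T.toReal, by rw [← EReal.coe_lt_coe_iff, EReal.coe_toReal htop hTbot]; exact_mod_cast hT, ?_⟩
      rw [hJ]; ext s
      simp only [mem_setOf_eq, mem_Ico]
      constructor
      · rintro ⟨h1, h2⟩
        exact ⟨h1, by rwa [← EReal.coe_lt_coe_iff, EReal.coe_toReal htop hTbot]⟩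
      · rintro ⟨h1, h2⟩
        exact ⟨h1, by rw [← EReal.coe_toReal htop hTbot]; exact_mod_cast h2⟩
  have h0J : (0:ℝ) ∈ J := by
    rcases hJcases with h | ⟨b, hb, h⟩ <;> rw [h]
    · exact self_mem_Ici
    · exact ⟨le_refl 0, hb⟩
  have hJIci : J ⊆ Ici (0:ℝ) := by
    rcases hJcases with h | ⟨b, hb, h⟩
    · rw [h]
    · rw [h]
      exact Ico_subset_Ici_self
  have hIccJ : ∀ t ∈ J, Icc (0:ℝ) t ⊆ J := by
    intro t ht
    rcases hJcases with h | ⟨b, hb, h⟩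
    · rw [h]; intro s hs; exact hs.1
    · rw [h] at ht ⊢; intro s hs; exact ⟨hs.1, lt_of_le_of_lt hs.2 ht.2⟩
  have huIccJ : ∀ t ∈ J, uIcc (0:ℝ) t ⊆ J := fun t ht => by
    rw [uIcc_of_le (hJIci ht)]; exact hIccJ t ht
  have hud : UniqueDiffOn ℝ J := by
    rcases hJcases with h | ⟨b, hb, h⟩ <;> rw [h]
    · exact uniqueDiffOn_Ici 0
    · exact uniqueDiffOn_Ico 0 b
  have uniq : ∀ (f : ℝ → ℝ) (d₁ d₂ : ℝ) (t : ℝ), t ∈ J → HasDerivWithinAt f d₁ J t →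
      HasDerivWithinAt f d₂ J t → d₁ = d₂ := by
    intro f d₁ d₂ t ht h1 h2
    rw [← h1.derivWithin (hud t ht), ← h2.derivWithin (hud t ht)]
  have hane : ∀ t ∈ J, ∀ ψ : ℝ, ηθ t ψ ≠ 0 := fun t ht ψ => (hηθpos t ht ψ).ne'
  have slice : ∀ G : ℝ × ℝ → ℝ, ContinuousOn G (J ×ˢ univ) → ∀ ψ : ℝ,
      ContinuousOn (fun τ => G (τ, ψ)) J := by
    intro G hG ψ
    exact hG.comp (Continuous.continuousOn (continuous_id.prodMk continuous_const))
      (fun τ hτ => ⟨hτ, mem_univ _⟩)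
  -- initial data
  have hη0fun : η 0 = fun ψ => ψ := funext hη0
  have hηθ0 : ∀ ψ : ℝ, ηθ 0 ψ = 1 := by
    intro ψ
    have h := hηθ 0 h0J ψ
    rw [hη0fun] at h
    exact h.unique (hasDerivAt_id ψ)
  have hηθθ0 : ∀ ψ : ℝ, ηθθ 0 ψ = 0 := by
    intro ψ
    have h := hηθθ 0 h0J ψ
    have hθfun : ηθ 0 = fun _ => (1:ℝ) := funext hηθ0
    rw [hθfun] at h
    exact h.unique (hasDerivAt_const ψ 1)
  have hηt0fun : ηt 0 = u₀ := funext hηt0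
  have hηtθ0 : ∀ ψ : ℝ, ηtθ 0 ψ = deriv u₀ ψ := by
    intro ψ
    have h := hηtθ 0 h0J ψ
    rw [hηt0fun] at h
    exact h.deriv.symm
  have hηtθθ0 : ∀ ψ : ℝ, ηtθθ 0 ψ = deriv (deriv u₀) ψ := by
    intro ψ
    have h := hηtθθ 0 h0J ψ
    have hfun : ηtθ 0 = deriv u₀ := funext hηtθ0
    rw [hfun] at h
    exact h.deriv.symm
  -- exponent bookkeeping
  have hlam1 : lam - 1 ≠ 0 := sub_ne_zero.2 hlam
  set p : ℝ := (lam - 1) / 2 with hp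
  have hpne : p ≠ 0 := div_ne_zero hlam1 two_ne_zero
  have hpγ : 1 / γ = p := by rw [hγ, one_div_div, hp]
  have hγeq : γ = 1 / p := by rw [hγ, hp, one_div_div]
  have hpg1 : p * γ = 1 := by rw [hγeq]; field_simp
  -- main computation
  intro t ht θ
  have ha := hηθpos t ht θ
  have hXd : HasDerivWithinAt (fun s => X s θ) (ηtθ t θ * p * ηθ t θ ^ (p - 1)) J t :=
    ((hηθt θ t ht).rpow_const (Or.inl (hane t ht θ))).congr
      (fun s hs => by rw [hX s hs θ, hpγ]) (by rw [hX t ht θ, hpγ])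
  have hXteq : Xt t θ = ηtθ t θ * p * ηθ t θ ^ (p - 1) :=
    uniq _ _ _ t ht (hXt θ t ht) hXd
  have hderivX : ∀ s ∈ J, deriv (X s) θ = ηθθ s θ * p * ηθ s θ ^ (p - 1) := by
    intro s hs
    have hXfun : X s = fun ψ => ηθ s ψ ^ p := funext fun ψ => by rw [hX s hs ψ, hpγ]
    rw [hXfun]
    exact ((hηθθ s hs θ).rpow_const (Or.inl (hane s hs θ))).deriv
  have hInt : ∀ s ∈ J, (∫ τ in (0:ℝ)..s, X τ θ ^ γ) = ∫ τ in (0:ℝ)..s, ηθ τ θ := by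
    intro s hs
    apply intervalIntegral.integral_congr
    intro τ hτ
    have hτJ : τ ∈ J := huIccJ s hs hτ
    show X τ θ ^ γ = ηθ τ θ
    rw [hX τ hτJ θ, hpγ, ← Real.rpow_mul (hηθpos τ hτJ θ).le, hpg1, Real.rpow_one]
  have hYfun : ∀ s ∈ J, Y s θ
      = -γ * (ηθθ s θ * p * ηθ s θ ^ (p - 1)) + σ * ηθ s θ ^ p * ∫ τ in (0:ℝ)..s, ηθ τ θ := by
    intro s hs
    rw [hY s hs θ, hderivX s hs, hInt s hs, hX s hs θ, hpγ]
  have hHd : HasDerivWithinAt (fun s => ∫ τ in (0:ℝ)..s, ηθ τ θ) (ηθ t θ) J t :=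
    aux_ftc J hJcases _ (slice _ hηθc θ) t ht
  have hYd : HasDerivWithinAt (fun s => Y s θ)
      (-γ * ((ηtθθ t θ * p) * ηθ t θ ^ (p - 1)
          + (ηθθ t θ * p) * (ηtθ t θ * (p - 1) * ηθ t θ ^ (p - 1 - 1)))
        + ((σ * (ηtθ t θ * p * ηθ t θ ^ (p - 1))) * (∫ τ in (0:ℝ)..t, ηθ τ θ)
          + (σ * ηθ t θ ^ p) * ηθ t θ)) J t := by
    have h1 := (((hηθθt θ t ht).mul_const p).mul
        (HasDerivWithinAt.rpow_const (p := p - 1) (hηθt θ t ht)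
          (Or.inl (hane t ht θ)))).const_mul (-γ)
    have h2 := (((HasDerivWithinAt.rpow_const (p := p) (hηθt θ t ht)
        (Or.inl (hane t ht θ))).const_mul σ).mul hHd)
    have h3 := h1.add h2
    refine (h3.congr (fun s hs => ?_) ?_)
    · rw [hYfun s hs]; rfl
    · rw [hYfun t ht]; rfl
  have hYteq : Yt t θ
      = -γ * ((ηtθθ t θ * p) * ηθ t θ ^ (p - 1)
          + (ηθθ t θ * p) * (ηtθ t θ * (p - 1) * ηθ t θ ^ (p - 1 - 1)))
        + ((σ * (ηtθ t θ * p * ηθ t θ ^ (p - 1))) * (∫ τ in (0:ℝ)..t, ηθ τ θ)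
          + (σ * ηθ t θ ^ p) * ηθ t θ) :=
    uniq _ _ _ t ht (hYt θ t ht) hYd
  have hXeq : X t θ = ηθ t θ ^ p := by rw [hX t ht θ, hpγ]
  have hYeq : Y t θ
      = -γ * (ηθθ t θ * p * ηθ t θ ^ (p - 1)) + σ * ηθ t θ ^ p * ∫ τ in (0:ℝ)..t, ηθ τ θ :=
    hYfun t ht
  -- exponent rewrites
  have e1 : ηθ t θ ^ (p - 1) = ηθ t θ ^ p / ηθ t θ := by
    rw [Real.rpow_sub ha, Real.rpow_one]
  have e2 : ηθ t θ ^ (p - 1 - 1) = ηθ t θ ^ p / (ηθ t θ * ηθ t θ) := by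
    rw [Real.rpow_sub ha, Real.rpow_sub ha, Real.rpow_one, div_div]
  have e3 : ηθ t θ ^ lam = ηθ t θ ^ p * ηθ t θ ^ p * ηθ t θ := by
    rw [show lam = p + p + 1 by rw [hp]; ring, Real.rpow_add ha, Real.rpow_add ha, Real.rpow_one]
  have e4 : ηθ t θ ^ (lam - 1) = ηθ t θ ^ p * ηθ t θ ^ p := by
    rw [show lam - 1 = p + p by rw [hp]; ring, Real.rpow_add ha]
  have hw : deriv (fun ψ => ηtθ t ψ / ηθ t ψ) θ
      = (ηtθθ t θ * ηθ t θ - ηtθ t θ * ηθθ t θ) / ηθ t θ ^ 2 :=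
    ((hηtθθ t ht θ).div (hηθθ t ht θ) (hane t ht θ)).deriv
  have key2 : X t θ * Yt t θ - Y t θ * Xt t θ
      = σ * ηθ t θ ^ lam - ηθ t θ ^ (lam - 1)
          * ((ηtθθ t θ * ηθ t θ - ηtθ t θ * ηθθ t θ) / ηθ t θ ^ 2) := by
    rw [hXeq, hXteq, hYteq, hYeq, e1, e2, e3, e4, hγeq]
    have hne := hane t ht θ
    field_simp
    ring
  have hcons := aux_conserved lam σ J hJcases ηt ηθ ηtθ ηθθ ηttθ ηtθθ hηθpos hηtθ hηθθ hηθt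
    hηttθ hηtθθ hηθc hηtθc hηθθc hηttθc hηtθθc hPDE t ht θ
  constructor
  · rw [key2, hcons, hηθ0 θ, hηθθ0 θ, hηtθθ0 θ]
    simp [Real.one_rpow]
  · rw [hw]
    exact key2
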